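/- (Bellard's formula) π = (1/2^6) · ∑_{k=0}^∞ ((-1)^k / 2^{10k}) · ( -2^5/(4k+1) - 1/(4k+3) + 2^8/(10k+1) - 2^6/(10k+3) - 2^2/(10k+5) - 2^2/(10k+7) + 1/(10k+9) ). -/

import Mathlib

/- Auxiliary definitions: `w = (1+i)/8` and its conjugate. -/
noncomputable def bellardW : ℂ := (1 + Complex.I)/8
noncomputable def bellardWb : ℂ := (1 - Complex.I)/8

lemma bellard_hI2 : Complex.I^2 = -1 := Complex.I_sq

lemma bellard_hw4 : bellardW^4 = -(1/1024) := by
  unfold bellardW; linear_combination ((Complex.I^2 + 4*Complex.I + 5)/4096) * bellard_hI2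

lemma bellard_hwb4 : bellardWb^4 = -(1/1024) := by
  unfold bellardWb; linear_combination ((Complex.I^2 - 4*Complex.I + 5)/4096) * bellard_hI2

lemma bellard_hwsum : bellardW + bellardWb = 1/4 := by unfold bellardW bellardWb; ring

lemma bellard_hw3sum : bellardW^3 + bellardWb^3 = -(1/128) := by
  unfold bellardW bellardWb; linear_combination (3/256 : ℂ) * bellard_hI2

lemma bellard_wnorm : ‖bellardW‖ < 1 := by
  unfold bellardW
  rw [norm_div]
  have h1 : ‖(1 + Complex.I)‖ ≤ 2 := by
    calc ‖(1 + Complex.I)‖ ≤ ‖(1:ℂ)‖ + ‖Complex.I‖ := norm_add_le _ _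
    _ = 2 := by rw [norm_one, Complex.norm_I]; norm_num
  have h2 : ‖(8:ℂ)‖ = 8 := by norm_num
  rw [h2]
  linarith

lemma bellard_wbnorm : ‖bellardWb‖ < 1 := by
  unfold bellardWb
  rw [norm_div, sub_eq_add_neg]
  have h1 : ‖(1 + -Complex.I)‖ ≤ 2 := by
    calc ‖(1 + -Complex.I)‖ ≤ ‖(1:ℂ)‖ + ‖-Complex.I‖ := norm_add_le _ _
    _ = 2 := by rw [norm_one, norm_neg, Complex.norm_I]; norm_num
  have h2 : ‖(8:ℂ)‖ = 8 := by norm_num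
  rw [h2]
  linarith

/-- The 4k-part of Bellard's series, as a complex series. -/
lemma bellard_blockC : HasSum (fun k : ℕ => ((-1:ℂ))^k * ((1:ℂ)/1024)^k *
    ((1/4)/(4*(k:ℂ)+1) + (1/128)/(4*(k:ℂ)+3)))
    (Complex.arctan bellardW + Complex.arctan bellardWb) := by
  have h := (Complex.hasSum_arctan (z := bellardW) bellard_wnorm).add
    (Complex.hasSum_arctan (z := bellardWb) bellard_wbnorm)
  replace h := (Nat.divModEquiv 2).symm.hasSum_iff.mpr h
  refine h.prod_fiberwise fun k => ?_
  convert hasSum_fintype _ using 1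
  rw [Fin.sum_univ_two]
  simp only [Equiv.symm_symm, Nat.divModEquiv_symm_apply, Function.comp]
  norm_num
  have e1 : ∀ (z : ℂ), z^4 = -(1/1024) → z^(2*(k*2)+1) = (-1)^k * (1/1024)^k * z := by
    intro z hz
    rw [show 2*(k*2)+1 = 4*k+1 by ring, pow_add, pow_mul, hz, pow_one,
      show (-(1/1024):ℂ) = (-1)*(1/1024) by ring, mul_pow]
  have e2 : ∀ (z : ℂ), z^4 = -(1/1024) → z^(2*(k*2+1)+1) = (-1)^k * (1/1024)^k * z^3 := by
    intro z hz
    rw [show 2*(k*2+1)+1 = 4*k+3 by ring, pow_add, pow_mul, hz,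
      show (-(1/1024):ℂ) = (-1)*(1/1024) by ring, mul_pow]
  rw [e1 bellardW bellard_hw4, e1 bellardWb bellard_hwb4,
    e2 bellardW bellard_hw4, e2 bellardWb bellard_hwb4]
  rw [show (2*((k:ℂ)*2)+1) = 4*(k:ℂ)+1 by ring, show (2*((k:ℂ)*2+1)+1) = 4*(k:ℂ)+3 by ring]
  have hneg : ((-1:ℂ))^(k*3) = (-1)^k := by rw [pow_mul']; norm_num
  linear_combination (-((-1:ℂ)^k*(1/1024)^k/(4*(k:ℂ)+1))) * bellard_hwsum
    + ((-1:ℂ)^k*(1/1024)^k/(4*(k:ℂ)+3)) * bellard_hw3sum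
    + ((3 + (k:ℂ)*4)⁻¹ * (bellardW^3 + bellardWb^3) * (1/1024)^k) * hneg

/-- `arctan w + arctan w̄ = arctan (8/31)`. -/
lemma bellard_arctanC :
    Complex.arctan bellardW + Complex.arctan bellardWb = ((Real.arctan (8/31) : ℝ) : ℂ) := by
  have c1 : ∀ z : ℂ, Complex.arctan z
      = -Complex.I/2 * Complex.log ((1 + z*Complex.I)/(1 - z*Complex.I)) := fun z => rfl
  have hA1 : (1 + bellardW*Complex.I)/(1 - bellardW*Complex.I) = (31+8*Complex.I)/41 := by
    unfold bellardW
    rw [Complex.ext_iff]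
    constructor <;>
    simp [Complex.div_re, Complex.div_im, Complex.normSq_apply] <;> norm_num
  have hA2 : (1 + bellardWb*Complex.I)/(1 - bellardWb*Complex.I) = (31+8*Complex.I)/25 := by
    unfold bellardWb
    rw [Complex.ext_iff]
    constructor <;>
    simp [Complex.div_re, Complex.div_im, Complex.normSq_apply] <;> norm_num
  have hA3 : (1 + ((8/31:ℝ):ℂ)*Complex.I)/(1 - ((8/31:ℝ):ℂ)*Complex.I)
      = ((31+8*Complex.I)/41) * ((31+8*Complex.I)/25) := by
    push_cast
    rw [Complex.ext_iff]
    constructor <;>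
    simp [Complex.div_re, Complex.div_im, Complex.normSq_apply, Complex.mul_re, Complex.mul_im] <;>
    norm_num
  have hne1 : ((31+8*Complex.I)/41 : ℂ) ≠ 0 := by
    intro h
    have := congrArg Complex.im h
    simp [Complex.div_im, Complex.normSq_apply] at this
  have hne2 : ((31+8*Complex.I)/25 : ℂ) ≠ 0 := by
    intro h
    have := congrArg Complex.im h
    simp [Complex.div_im, Complex.normSq_apply] at this
  have harg : ∀ r : ℝ, 0 < r →
      Complex.arg ((31+8*Complex.I)/(r:ℝ)) = Complex.arg (31+8*Complex.I) := by
    intro r hr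
    rw [show ((31+8*Complex.I)/(r:ℝ) : ℂ) = ((r⁻¹ : ℝ) : ℂ) * (31+8*Complex.I) by
        push_cast; field_simp,
      Complex.arg_real_mul _ (by positivity)]
  have hargA : 0 ≤ Complex.arg (31+8*Complex.I) ∧ Complex.arg (31+8*Complex.I) < Real.pi/2 := by
    constructor
    · rw [Complex.arg_nonneg_iff]; simp
    · rw [Complex.arg_lt_pi_div_two_iff]; left; norm_num
  have hlog : Complex.log (((31+8*Complex.I)/41) * ((31+8*Complex.I)/25))
      = Complex.log ((31+8*Complex.I)/41) + Complex.log ((31+8*Complex.I)/25) := by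
    rw [Complex.log_mul_eq_add_log_iff hne1 hne2]
    have e1 := harg 41 (by norm_num)
    have e2 := harg 25 (by norm_num)
    push_cast at e1 e2
    rw [e1, e2]
    constructor
    · have := Real.pi_pos; linarith [hargA.1]
    · linarith [hargA.2, hargA.1]
  rw [Complex.ofReal_arctan, c1, c1, c1, hA1, hA2, hA3, hlog]
  ring

/-- The 4k-part, as a real series. -/
lemma bellard_blockA : HasSum (fun k : ℕ => ((-1:ℝ))^k * ((1:ℝ)/1024)^k *
    ((1/4)/(4*(k:ℝ)+1) + (1/128)/(4*(k:ℝ)+3))) (Real.arctan (8/31)) := by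
  rw [← Complex.hasSum_ofReal]
  have eq1 : (fun k : ℕ => ((((-1:ℝ))^k * ((1:ℝ)/1024)^k *
      ((1/4)/(4*(k:ℝ)+1) + (1/128)/(4*(k:ℝ)+3)) : ℝ) : ℂ))
      = fun k : ℕ => ((-1:ℂ))^k * ((1:ℂ)/1024)^k *
        ((1/4)/(4*(k:ℂ)+1) + (1/128)/(4*(k:ℂ)+3)) := by
    funext k
    push_cast
    ring
  rw [eq1, ← bellard_arctanC]
  exact bellard_blockC

/-- The 10k-part coming from `arctan (1/2)`. -/
lemma bellard_block5 : HasSum (fun k : ℕ => ((-1:ℝ))^k * ((1:ℝ)/1024)^k *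
    ((1/2)/(10*(k:ℝ)+1) - (1/8)/(10*(k:ℝ)+3) + (1/32)/(10*(k:ℝ)+5)
      - (1/128)/(10*(k:ℝ)+7) + (1/512)/(10*(k:ℝ)+9))) (Real.arctan (1/2)) := by
  have h := Real.hasSum_arctan (x := (1/2:ℝ))
    (by rw [Real.norm_eq_abs]; rw [abs_of_pos] <;> norm_num)
  replace h := (Nat.divModEquiv 5).symm.hasSum_iff.mpr h
  refine h.prod_fiberwise fun k => ?_
  convert hasSum_fintype _ using 1
  rw [Fin.sum_univ_five]
  simp only [Equiv.symm_symm, Nat.divModEquiv_symm_apply, Function.comp]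
  norm_num
  have e1 : ∀ r:ℕ, (-1:ℝ)^(k*5+r) = (-1)^k * (-1)^r := fun r => by
    rw [pow_add, mul_comm k 5, pow_mul]; norm_num
  have e2 : ∀ r:ℕ, ((1:ℝ)/2)^(2*(k*5+r)+1) = (1/1024)^k * (1/2)^(2*r+1) := fun r => by
    rw [show 2*(k*5+r)+1 = 10*k+(2*r+1) by ring, pow_add, pow_mul]; norm_num
  have e1' : (-1:ℝ)^(k*5) = (-1)^k := by rw [mul_comm k 5, pow_mul]; norm_num
  have e2' : ((1:ℝ)/2)^(2*(k*5)+1) = (1/1024)^k * (1/2) := by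
    rw [show 2*(k*5)+1 = 10*k+1 by ring, pow_add, pow_mul]; norm_num
  rw [e1 1, e1 2, e1 3, e1 4, e2 1, e2 2, e2 3, e2 4, e1', e2']
  push_cast
  ring

/-- The `10k+5` correction term, from `arctan (1/32)`. -/
lemma bellard_block32 : HasSum (fun k : ℕ => ((-1:ℝ))^k * ((1:ℝ)/1024)^k *
    (20/(10*(k:ℝ)+5))) (128 * Real.arctan (1/32)) := by
  have h := (Real.hasSum_arctan (x := (1/32:ℝ))
    (by rw [Real.norm_eq_abs]; rw [abs_of_pos] <;> norm_num)).mul_left 128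
  have eq1 : (fun k : ℕ => (128:ℝ) * ((-1)^k * (1/32)^(2*k+1) / ((2*k+1 : ℕ) : ℝ)))
      = fun k : ℕ => ((-1:ℝ))^k * ((1:ℝ)/1024)^k * (20/(10*(k:ℝ)+5)) := by
    funext k
    rw [pow_succ, pow_mul]
    push_cast
    have d1 : (2*(k:ℝ)+1) ≠ 0 := by positivity
    have d2 : (10*(k:ℝ)+5) ≠ 0 := by positivity
    field_simp
    ring
  rw [← eq1]
  exact h

/-- Machin-type identity. -/
lemma bellard_machin :
    512 * Real.arctan (1/2) - 128 * Real.arctan (1/32) - 128 * Real.arctan (8/31)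
      = 64 * Real.pi := by
  have h1 := Real.arctan_add (x := (1/2:ℝ)) (y := 1/2) (by norm_num)
  rw [show ((1/2:ℝ)+1/2)/(1-(1/2:ℝ)*(1/2)) = 4/3 by norm_num] at h1
  have h2 := Real.arctan_add_eq_add_pi (x := (4/3:ℝ)) (y := 4/3) (by norm_num) (by norm_num)
  rw [show ((4/3:ℝ)+4/3)/(1-(4/3:ℝ)*(4/3)) = -(24/7) by norm_num, Real.arctan_neg] at h2
  have h3 := Real.arctan_add (x := (24/7:ℝ)) (y := 1/32) (by norm_num)
  rw [show ((24/7:ℝ)+1/32)/(1-(24/7:ℝ)*(1/32)) = 31/8 by norm_num] at h3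
  have h4 := Real.arctan_inv_of_pos (x := (31/8:ℝ)) (by norm_num)
  rw [show ((31/8:ℝ))⁻¹ = 8/31 by norm_num] at h4
  linarith

theorem statement17 :
    Summable (fun k : ℕ => ((-1 : ℝ) ^ k / (2 : ℝ) ^ (10 * k)) *
      (-(2 : ℝ) ^ 5 / (4 * (k : ℝ) + 1) - 1 / (4 * (k : ℝ) + 3)
        + (2 : ℝ) ^ 8 / (10 * (k : ℝ) + 1) - (2 : ℝ) ^ 6 / (10 * (k : ℝ) + 3)
        - (2 : ℝ) ^ 2 / (10 * (k : ℝ) + 5) - (2 : ℝ) ^ 2 / (10 * (k : ℝ) + 7)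
        + 1 / (10 * (k : ℝ) + 9))) ∧
    Real.pi = (1 / 2 ^ 6) *
      ∑' k : ℕ, ((-1 : ℝ) ^ k / (2 : ℝ) ^ (10 * k)) *
        (-(2 : ℝ) ^ 5 / (4 * (k : ℝ) + 1) - 1 / (4 * (k : ℝ) + 3)
          + (2 : ℝ) ^ 8 / (10 * (k : ℝ) + 1) - (2 : ℝ) ^ 6 / (10 * (k : ℝ) + 3)
          - (2 : ℝ) ^ 2 / (10 * (k : ℝ) + 5) - (2 : ℝ) ^ 2 / (10 * (k : ℝ) + 7)
          + 1 / (10 * (k : ℝ) + 9)) := by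
  have H := ((bellard_block5.mul_left 512).sub bellard_block32).add
    (bellard_blockA.mul_left (-128))
  have eq1 : (fun k : ℕ => 512 * (((-1:ℝ))^k * ((1:ℝ)/1024)^k *
      ((1/2)/(10*(k:ℝ)+1) - (1/8)/(10*(k:ℝ)+3) + (1/32)/(10*(k:ℝ)+5)
        - (1/128)/(10*(k:ℝ)+7) + (1/512)/(10*(k:ℝ)+9)))
      - ((-1:ℝ))^k * ((1:ℝ)/1024)^k * (20/(10*(k:ℝ)+5))
      + (-128) * (((-1:ℝ))^k * ((1:ℝ)/1024)^k *
        ((1/4)/(4*(k:ℝ)+1) + (1/128)/(4*(k:ℝ)+3))))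
      = (fun k : ℕ => ((-1 : ℝ) ^ k / (2 : ℝ) ^ (10 * k)) *
      (-(2 : ℝ) ^ 5 / (4 * (k : ℝ) + 1) - 1 / (4 * (k : ℝ) + 3)
        + (2 : ℝ) ^ 8 / (10 * (k : ℝ) + 1) - (2 : ℝ) ^ 6 / (10 * (k : ℝ) + 3)
        - (2 : ℝ) ^ 2 / (10 * (k : ℝ) + 5) - (2 : ℝ) ^ 2 / (10 * (k : ℝ) + 7)
        + 1 / (10 * (k : ℝ) + 9))) := by
    funext k
    rw [pow_mul]
    norm_num
    rw [show ((1:ℝ)/1024)^k = ((1024:ℝ)^k)⁻¹ by rw [one_div, inv_pow]]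
    ring
  rw [eq1] at H
  have hval : 512 * Real.arctan (1/2) - 128 * Real.arctan (1/32)
      + (-128) * Real.arctan (8/31) = 64 * Real.pi := by
    have := bellard_machin; linarith
  rw [hval] at H
  refine ⟨H.summable, ?_⟩
  rw [H.tsum_eq]
  ring
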